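/- Let G be an infinite abelian group, let T = D_1 × ⋯ × D_n be a finite product of reduced seminormal finitely primary monoids, let ι : T → G be a monoid homomorphism, and let B = B(G, T, ι) = {S·t ∈ F(G) × T : σ(S) + ι(t) = 0} be the T-block monoid. Then Δ(B) = ℕ. -/

import Mathlib

namespace ArXivSeminormal

attribute [local instance] Classical.propDecidable

noncomputable section

/-! ### Generic factorization theory in commutative monoids -/

variable {M : Type*} [CommMonoid M]

/-- The set of factorizations of `a` (in the sense of `Z(a)`): multisets of irreducible
elements of the reduced monoid (modelled by `Associates M`) whose product is the class
of `a`. -/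
def Factorizations (a : M) : Set (Multiset (Associates M)) :=
  {z | (∀ x ∈ z, Irreducible x) ∧ z.prod = Associates.mk a}

/-- The set of lengths `L(a)` of an element `a`. -/
def lengthSet (a : M) : Set ℕ :=
  {k | ∃ z ∈ Factorizations a, Multiset.card z = k}

/-- The set of (successive) distances `Δ(L)` of a set `L ⊆ ℕ`. -/
def DeltaSet (L : Set ℕ) : Set ℕ :=
  {d | ∃ k l, k ∈ L ∧ l ∈ L ∧ k < l ∧ (∀ m, k < m → m < l → m ∉ L) ∧ d = l - k}

/-- The set of distances `Δ(H)` of a monoid `H`. -/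
def DeltaMonoid (M : Type*) [CommMonoid M] : Set ℕ :=
  ⋃ a : M, DeltaSet (lengthSet a)

/-- The distance between two factorizations:
`d(z,z') = max (card (z - gcd z z')) (card (z' - gcd z z'))`. -/
def factorDist (z z' : Multiset (Associates M)) : ℕ :=
  max (Multiset.card (z - z')) (Multiset.card (z' - z))

/-- The catenary degree `c(H)` of a monoid `H`: the smallest `N ∈ ℕ∞` such that any two
factorizations of any element are connected by a chain of factorizations with consecutive
distances at most `N`. -/
def catenaryDegree (M : Type*) [CommMonoid M] : ℕ∞ :=
  sInf {N : ℕ∞ | ∀ (a : M), ∀ z ∈ Factorizations a, ∀ z' ∈ Factorizations a,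
    ∃ c : List (Multiset (Associates M)), c.head? = some z ∧ c.getLast? = some z' ∧
      (∀ w ∈ c, w ∈ Factorizations a) ∧
      List.Chain' (fun u v => (factorDist u v : ℕ∞) ≤ N) c}

/-- A monoid is factorial if every element has a unique factorization. -/
def IsFactorialMonoid (M : Type*) [CommMonoid M] : Prop :=
  ∀ a : M, ∃! z : Multiset (Associates M), z ∈ Factorizations a

/-! ### Free commutative monoids, block monoids, Davenport constant -/

/-- The free abelian (multiplicatively written) monoid on a set `P`. -/
abbrev FreeCM (P : Type*) := Multiplicative (Multiset P)

/-- The sum homomorphism `σ : F(G) → G`. -/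
def sigmaHom (G : Type*) [AddCommMonoid G] : FreeCM G →* Multiplicative G :=
  AddMonoidHom.toMultiplicative
    { toFun := Multiset.sum
      map_zero' := Multiset.sum_zero
      map_add' := Multiset.sum_add }

/-- The monoid of zero-sum sequences over `G`. -/
def BlockMonoid (G : Type*) [AddCommMonoid G] : Submonoid (FreeCM G) :=
  MonoidHom.mker (sigmaHom G)

/-- The Davenport constant of `G`: the supremum of lengths of minimal zero-sum sequences. -/
def Davenport (G : Type*) [AddCommMonoid G] : ℕ :=
  sSup {k | ∃ u : BlockMonoid G, Irreducible u ∧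
    Multiset.card (Multiplicative.toAdd (u : FreeCM G)) = k}

/-! ### Reduced seminormal finitely primary monoids -/

/-- The `Fin s →₀ ℕ` function with all values `1`, i.e. the exponent vector of
`q_1 ⋯ q_s`. -/
def allOnes (s : ℕ) : Fin s →₀ ℕ := Finsupp.equivFunOnFinite.symm fun _ => 1

/-- The reduced seminormal finitely primary monoid of rank `s` with unit group `U` of the
complete integral closure:
`D = {ε q_1^{k_1} ⋯ q_s^{k_s} : ε ∈ U, all k_j ≥ 1} ∪ {1} ⊆ U × [q_1,…,q_s]`. -/
def seminormalD (U : Type*) [CommGroup U] (s : ℕ) :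
    Submonoid (U × Multiplicative (Fin s →₀ ℕ)) where
  carrier := {x | x = 1 ∨ ∀ j, 1 ≤ Multiplicative.toAdd x.2 j}
  one_mem' := Or.inl rfl
  mul_mem' := by
    rintro a b (rfl | ha) (rfl | hb)
    · exact Or.inl (mul_one 1)
    · rw [Set.mem_setOf_eq, one_mul]; exact Or.inr hb
    · rw [Set.mem_setOf_eq, mul_one]; exact Or.inr ha
    · refine Or.inr fun j => ?_
      have h1 := ha j
      have h2 := hb j
      have h3 : Multiplicative.toAdd ((a * b).2) j
          = Multiplicative.toAdd a.2 j + Multiplicative.toAdd b.2 j := rfl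
      omega

/-! ### T-block monoids (Setting (S)) -/

/-- The monoid `T = D_1 × ⋯ × D_n`. -/
abbrev Tm {n : ℕ} (U : Fin n → Type*) [∀ i, CommGroup (U i)] (s : Fin n → ℕ) :=
  ∀ i, ↥(seminormalD (U i) (s i))

/-- The monoid `D̂_1 × ⋯ × D̂_n`. -/
abbrev HatTm {n : ℕ} (U : Fin n → Type*) [∀ i, CommGroup (U i)] (s : Fin n → ℕ) :=
  ∀ i, U i × Multiplicative (Fin (s i) →₀ ℕ)

/-- The monoid `F = F(G) × T`. -/
abbrev Fm (G : Type*) {n : ℕ} (U : Fin n → Type*) [∀ i, CommGroup (U i)] (s : Fin n → ℕ) :=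
  FreeCM G × Tm U s

/-- The homomorphism `F → G`, `S·t ↦ σ(S) + ι(t)`, whose kernel is the `T`-block monoid;
it computes the class `[a] ∈ G ≅ q(F)/q(B)` of `a ∈ F`. -/
def TBlockPhi (G : Type*) [AddCommGroup G] {n : ℕ} (U : Fin n → Type*) [∀ i, CommGroup (U i)]
    (s : Fin n → ℕ) (iota : Tm U s →* Multiplicative G) : Fm G U s →* Multiplicative G :=
  ((sigmaHom G).comp (MonoidHom.fst _ _)) * (iota.comp (MonoidHom.snd _ _))

/-- The `T`-block monoid `B = B(G, T, ι) = {S·t ∈ F(G) × T : σ(S) + ι(t) = 0}`. -/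
def TBlock (G : Type*) [AddCommGroup G] {n : ℕ} (U : Fin n → Type*) [∀ i, CommGroup (U i)]
    (s : Fin n → ℕ) (iota : Tm U s →* Multiplicative G) : Submonoid (Fm G U s) :=
  MonoidHom.mker (TBlockPhi G U s iota)

/-- The inclusion `T = D_1 × ⋯ × D_n → D̂_1 × ⋯ × D̂_n`. -/
def embedT {n : ℕ} (U : Fin n → Type*) [∀ i, CommGroup (U i)] (s : Fin n → ℕ) :
    Tm U s →* HatTm U s :=
  Pi.monoidHom fun i => (seminormalD (U i) (s i)).subtype.comp
    (Pi.evalMonoidHom (fun j => ↥(seminormalD (U j) (s j))) i)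

/-- The norm `‖A‖ = k + 2·Σ_i max L_{D_i}(a_i)` of `A = g_1⋯g_k a_1⋯a_n ∈ F`. -/
def normF (G : Type*) {n : ℕ} (U : Fin n → Type*) [∀ i, CommGroup (U i)] (s : Fin n → ℕ)
    (A : Fm G U s) : ℕ :=
  Multiset.card (Multiplicative.toAdd A.1) + 2 * ∑ i, sSup (lengthSet (A.2 i))

/-- The class `[ε] ∈ G` of a unit `ε ∈ D̂_ν^×`. -/
def classOfUnit {G : Type*} [AddCommGroup G] {n : ℕ} (U : Fin n → Type*)
    [∀ i, CommGroup (U i)] (s : Fin n → ℕ) (iotahat : HatTm U s →* Multiplicative G)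
    (ν : Fin n) (ε : U ν) : Multiplicative G :=
  iotahat (Pi.mulSingle ν (ε, 1))

/-- The class `[q_{ν,j}] ∈ G` of the prime `q_{ν,j}` of `D̂_ν`. -/
def classOfPrime {G : Type*} [AddCommGroup G] {n : ℕ} (U : Fin n → Type*)
    [∀ i, CommGroup (U i)] (s : Fin n → ℕ) (iotahat : HatTm U s →* Multiplicative G)
    (ν : Fin n) (j : Fin (s ν)) : Multiplicative G :=
  iotahat (Pi.mulSingle ν (1, Multiplicative.ofAdd (Finsupp.single j 1)))

/-- The quantity `d_ν ∈ {-1, 0, 1, 2}` from Theorem 3.3 (for `G = {0, e}` of order two). -/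
def dval {G : Type*} [AddCommGroup G] {n : ℕ} (U : Fin n → Type*) [∀ i, CommGroup (U i)]
    (s : Fin n → ℕ) (iotahat : HatTm U s →* Multiplicative G) (e : G) (ν : Fin n) : ℤ :=
  if (∀ ε : U ν, classOfUnit U s iotahat ν ε = 1) ∧ s ν = 2 ∧
      (Finset.univ.filter fun j : Fin (s ν) =>
        classOfPrime U s iotahat ν j = Multiplicative.ofAdd e).card = 2 then 2
  else if (∀ ε : U ν, classOfUnit U s iotahat ν ε = 1) ∧ s ν = 1 then 0
  else if (∀ ε : U ν, classOfUnit U s iotahat ν ε = 1) ∧ 2 ≤ s ν ∧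
      (Finset.univ.filter fun j : Fin (s ν) =>
        classOfPrime U s iotahat ν j = Multiplicative.ofAdd e).card = 0 then -1
  else 1

attribute [local instance 2000] instDecidableEqFin instDecidableEqProd instDecidableEqBool instDecidableEqNat

section GroupLemma

variable {G : Type*} [AddCommGroup G]

/-- Finite set of all `[-2,2]`-combinations of `x`. -/
noncomputable def comboSet {m : ℕ} (x : Fin m → G) : Finset G :=
  Finset.image (fun d : Fin m → ↥(Finset.Icc (-2:ℤ) 2) => ∑ i, ((d i : ℤ) • x i)) Finset.univ

lemma mem_comboSet {m : ℕ} (x : Fin m → G) (c : Fin m → ℤ)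
    (hc : ∀ i, -2 ≤ c i ∧ c i ≤ 2) : (∑ i, c i • x i) ∈ comboSet x :=
  Finset.mem_image.2 ⟨fun i => ⟨c i, Finset.mem_Icc.2 ⟨(hc i).1, (hc i).2⟩⟩,
    Finset.mem_univ _, rfl⟩

/-- property (i) -/
def StarI {m : ℕ} (x : Fin m → G) : Prop :=
  ∀ c : Fin m → ℤ, (∀ i, -1 ≤ c i ∧ c i ≤ 1) → c ≠ 0 → ∑ i, c i • x i ≠ 0

/-- property (ii) -/
def StarII {m : ℕ} (x : Fin m → G) : Prop :=
  ∀ c : Fin m → ℤ, (∀ i, 0 ≤ c i ∧ c i ≤ 2) → (∃ i, c i = 1) → ∑ i, c i • x i ≠ 0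

lemma snoc_sum_eq {m : ℕ} (x : Fin m → G) (g : G) (c : Fin (m+1) → ℤ) :
    ∑ i, c i • Fin.snoc x g i
      = (∑ i : Fin m, c i.castSucc • x i) + c (Fin.last m) • g := by
  rw [Fin.sum_univ_castSucc]
  simp only [Fin.snoc_castSucc, Fin.snoc_last]

lemma c_comp_ne_zero {m : ℕ} (c : Fin (m+1) → ℤ) (hc : c ≠ 0)
    (hl : c (Fin.last m) = 0) : (fun i : Fin m => c i.castSucc) ≠ 0 := by
  intro h
  apply hc
  funext i
  induction i using Fin.lastCases with
  | last => exact hl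
  | cast j => exact congrFun h j

lemma extract_g {m : ℕ} (x : Fin m → G) (g : G) (c : Fin m → ℤ) (e : ℤ)
    (hs : (∑ i : Fin m, c i • x i) + e • g = 0) :
    e • g = ∑ i : Fin m, (-c i) • x i := by
  have h := eq_neg_of_add_eq_zero_right hs
  rw [h, ← Finset.sum_neg_distrib]
  congr 1; funext i; rw [neg_smul]

/-- Case: doubling image infinite. -/
lemma star_aux_b2 (hD : (Set.range (fun g : G => g + g)).Infinite) (m : ℕ) :
    ∃ x : Fin m → G, StarI x ∧ StarII x := by
  induction m with
  | zero =>
      refine ⟨Fin.elim0, ?_, ?_⟩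
      · intro c _ hc
        exact absurd (funext fun i => i.elim0) hc
      · rintro c _ ⟨i, _⟩; exact i.elim0
  | succ m ih =>
      obtain ⟨x, h1, h2⟩ := ih
      obtain ⟨v, hv, hvF⟩ := hD.exists_notMem_finset
        (comboSet x ∪ (comboSet x).image (fun a => a + a))
      obtain ⟨g, rfl⟩ := hv
      have hgg : g + g ∉ comboSet x := fun h => hvF (Finset.mem_union_left _ h)
      have hg : g ∉ comboSet x := fun h =>
        hvF (Finset.mem_union_right _ (Finset.mem_image_of_mem _ h))
      refine ⟨Fin.snoc x g, ?_, ?_⟩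
      · intro c hc hc0 hs
        rw [snoc_sum_eq] at hs
        have hb := hc (Fin.last m)
        have h3 : c (Fin.last m) = -1 ∨ c (Fin.last m) = 0 ∨ c (Fin.last m) = 1 := by omega
        rcases h3 with h3 | h3 | h3
        · -- g = ∑ c • x
          have := extract_g x g _ _ hs
          rw [h3, neg_one_smul, neg_eq_iff_eq_neg, ← Finset.sum_neg_distrib] at this
          apply hg
          have : g = ∑ i : Fin m, c i.castSucc • x i := by
            rw [this]; congr 1; funext i; rw [neg_smul, neg_neg]
          rw [this]
          exact mem_comboSet x _ (fun i => by have := hc i.castSucc; omega)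
        · rw [h3, zero_smul, add_zero] at hs
          exact h1 _ (fun i => hc i.castSucc) (c_comp_ne_zero c hc0 h3) hs
        · have := extract_g x g _ _ hs
          rw [h3, one_smul] at this
          apply hg
          rw [this]
          exact mem_comboSet x _ (fun i => by have := hc i.castSucc; omega)
      · intro c hc ⟨i0, hi0⟩ hs
        rw [snoc_sum_eq] at hs
        have hb := hc (Fin.last m)
        have h3 : c (Fin.last m) = 0 ∨ c (Fin.last m) = 1 ∨ c (Fin.last m) = 2 := by omega
        rcases h3 with h3 | h3 | h3
        · rw [h3, zero_smul, add_zero] at hs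
          have hi0' : i0 ≠ Fin.last m := fun h => by rw [h, h3] at hi0; exact one_ne_zero hi0.symm
          obtain ⟨j, rfl⟩ := Fin.exists_castSucc_eq.2 hi0'
          exact h2 _ (fun i => hc i.castSucc) ⟨j, hi0⟩ hs
        · have := extract_g x g _ _ hs
          rw [h3, one_smul] at this
          apply hg; rw [this]
          exact mem_comboSet x _ (fun i => by have := hc i.castSucc; omega)
        · have := extract_g x g _ _ hs
          rw [h3] at this
          apply hgg
          rw [show g + g = (2:ℤ) • g from (two_zsmul g).symm, this]
          exact mem_comboSet x _ (fun i => by have := hc i.castSucc; omega)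

/-- b1 -/
lemma star_aux_b1 [Infinite G] (hD : (Set.range (fun g : G => g + g)).Finite) (m : ℕ) :
    ∃ x : Fin m → G, StarI x ∧
      (∀ c : Fin m → ℤ, (∀ i, 0 ≤ c i ∧ c i ≤ 2) → (∃ i, c i = 1) →
        ∀ v ∈ insert (0:G) hD.toFinset, (∑ i, c i • x i) + v ≠ 0) := by
  have hVclosed : ∀ g : G, ∀ v ∈ insert (0:G) hD.toFinset,
      (g + g) + v ∈ insert (0:G) hD.toFinset := by
    intro g v hv
    rcases Finset.mem_insert.1 hv with rfl | hv
    · exact Finset.mem_insert_of_mem (hD.mem_toFinset.2 ⟨g, by simp⟩)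
    · obtain ⟨h, rfl⟩ := hD.mem_toFinset.1 hv
      exact Finset.mem_insert_of_mem (hD.mem_toFinset.2 ⟨g + h, by abel⟩)
  induction m with
  | zero =>
      refine ⟨Fin.elim0, ?_, ?_⟩
      · intro c _ hc
        exact absurd (funext fun i => i.elim0) hc
      · rintro c _ ⟨i, _⟩; exact i.elim0
  | succ m ih =>
      obtain ⟨x, h1, h2⟩ := ih
      set V : Finset G := insert (0:G) hD.toFinset with hV
      obtain ⟨g, hg⟩ := Infinite.exists_notMem_finset
        (comboSet x ∪ Finset.image
          (fun p : (Fin m → ↥(Finset.Icc (-2:ℤ) 2)) × ↥V =>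
            -(∑ i, ((p.1 i : ℤ)) • x i) - (p.2 : G)) Finset.univ)
      have hgF : g ∉ comboSet x := fun h => hg (Finset.mem_union_left _ h)
      have hgF2 : ∀ (c : Fin m → ℤ), (∀ i, -2 ≤ c i ∧ c i ≤ 2) → ∀ v ∈ V,
          g ≠ -(∑ i, c i • x i) - v := by
        rintro c hc v hv rfl
        refine hg (Finset.mem_union_right _ (Finset.mem_image.2
          ⟨⟨fun i => ⟨c i, Finset.mem_Icc.2 ⟨(hc i).1, (hc i).2⟩⟩, ⟨v, hv⟩⟩,
            Finset.mem_univ _, rfl⟩))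
      refine ⟨Fin.snoc x g, ?_, ?_⟩
      · intro c hc hc0 hs
        rw [snoc_sum_eq] at hs
        have hb := hc (Fin.last m)
        have h3 : c (Fin.last m) = -1 ∨ c (Fin.last m) = 0 ∨ c (Fin.last m) = 1 := by omega
        rcases h3 with h3 | h3 | h3
        · have h4 := extract_g x g _ _ hs
          rw [h3, neg_one_smul, neg_eq_iff_eq_neg, ← Finset.sum_neg_distrib] at h4
          apply hgF
          have h5 : g = ∑ i : Fin m, c i.castSucc • x i := by
            rw [h4]; congr 1; funext i; rw [neg_smul, neg_neg]
          rw [h5]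
          exact mem_comboSet x _ (fun i => by have := hc i.castSucc; omega)
        · rw [h3, zero_smul, add_zero] at hs
          exact h1 _ (fun i => hc i.castSucc) (c_comp_ne_zero c hc0 h3) hs
        · have h4 := extract_g x g _ _ hs
          rw [h3, one_smul] at h4
          apply hgF; rw [h4]
          exact mem_comboSet x _ (fun i => by have := hc i.castSucc; omega)
      · intro c hc ⟨i0, hi0⟩ v hv hs
        rw [snoc_sum_eq, add_right_comm] at hs
        have hb := hc (Fin.last m)
        have h3 : c (Fin.last m) = 0 ∨ c (Fin.last m) = 1 ∨ c (Fin.last m) = 2 := by omega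
        rcases h3 with h3 | h3 | h3
        · rw [h3, zero_smul, add_zero] at hs
          have hi0' : i0 ≠ Fin.last m := fun h => by rw [h, h3] at hi0; exact one_ne_zero hi0.symm
          obtain ⟨j, rfl⟩ := Fin.exists_castSucc_eq.2 hi0'
          exact h2 _ (fun i => hc i.castSucc) ⟨j, hi0⟩ v hv hs
        · -- c last = 1 : g = -(sum + v)
          rw [h3, one_smul] at hs
          have h4 : g = -(∑ i : Fin m, c i.castSucc • x i + v) := by
            exact eq_neg_of_add_eq_zero_right hs
          refine hgF2 (fun i => c i.castSucc)
            (fun i => by show -2 ≤ c i.castSucc ∧ c i.castSucc ≤ 2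
                         have := hc i.castSucc; omega) v hv ?_
          rw [h4]; abel
        · -- c last = 2 : fold 2g+v into V
          rw [h3] at hs
          have hi0' : i0 ≠ Fin.last m := fun h => by rw [h, h3] at hi0; omega
          obtain ⟨j, rfl⟩ := Fin.exists_castSucc_eq.2 hi0'
          have hv' : (g + g) + v ∈ V := hVclosed g v hv
          refine h2 _ (fun i => hc i.castSucc) ⟨j, hi0⟩ _ hv' ?_
          rw [← hs, two_zsmul]; abel

/-- The combined group lemma. -/
lemma exists_star (G : Type*) [AddCommGroup G] [Infinite G] (m : ℕ) :
    ∃ x : Fin m → G, StarI x ∧ StarII x := by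
  rcases Set.finite_or_infinite (Set.range (fun g : G => g + g)) with hD | hD
  · obtain ⟨x, h1, h2⟩ := star_aux_b1 hD m
    exact ⟨x, h1, fun c hc hex =>
      by simpa using h2 c hc hex 0 (Finset.mem_insert_self _ _)⟩
  · exact star_aux_b2 hD m

/-- Existence of a good tuple `z` with `∑ z = 0`. -/
lemma exists_z (G : Type*) [AddCommGroup G] [Infinite G] (K : ℕ) (hK : 3 ≤ K) :
    ∃ z : Fin K → G, (∑ i, z i) = 0 ∧
      ∀ c : Fin K → ℤ, (∀ i, -1 ≤ c i ∧ c i ≤ 1) → ∑ i, c i • z i = 0 →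
        (∀ i, c i = 0) ∨ (∀ i, c i ≠ 0) := by
  obtain ⟨k, rfl⟩ : ∃ k, K = k + 1 := ⟨K - 1, by omega⟩
  obtain ⟨x, h1, h2⟩ := exists_star G k
  refine ⟨Fin.snoc x (-∑ i, x i), ?_, ?_⟩
  · rw [Fin.sum_univ_castSucc]
    simp only [Fin.snoc_castSucc, Fin.snoc_last]
    abel
  · intro c hc hs
    rw [snoc_sum_eq] at hs
    have hkey : ∑ i : Fin k, (c i.castSucc - c (Fin.last k)) • x i = 0 := by
      have he : ∑ i : Fin k, (c i.castSucc - c (Fin.last k)) • x i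
          = (∑ i : Fin k, c i.castSucc • x i) + c (Fin.last k) • -∑ i : Fin k, x i := by
        rw [smul_neg, Finset.smul_sum, ← sub_eq_add_neg, ← Finset.sum_sub_distrib]
        exact Finset.sum_congr rfl fun i _ => sub_smul _ _ _
      rw [he, hs]
    have hb := hc (Fin.last k)
    have h3 : c (Fin.last k) = -1 ∨ c (Fin.last k) = 0 ∨ c (Fin.last k) = 1 := by omega
    rcases h3 with h3 | h3 | h3
    · right
      intro i hi0
      induction i using Fin.lastCases with
      | last => rw [h3] at hi0; omega
      | cast j =>
          refine h2 (fun i => c i.castSucc + 1)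
            (fun i => by show 0 ≤ c i.castSucc + 1 ∧ c i.castSucc + 1 ≤ 2
                         have := hc i.castSucc; omega)
            ⟨j, by show c j.castSucc + 1 = 1; omega⟩ ?_
          calc ∑ i : Fin k, (c i.castSucc + 1) • x i
              = ∑ i : Fin k, (c i.castSucc - c (Fin.last k)) • x i :=
                Finset.sum_congr rfl fun i _ => by congr 1; omega
            _ = 0 := hkey
    · left
      intro i
      induction i using Fin.lastCases with
      | last => exact h3
      | cast j =>
          by_contra hne
          refine h1 (fun i => c i.castSucc) (fun i => hc i.castSucc) ?_ ?_
          · intro h; exact hne (congrFun h j)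
          · calc ∑ i : Fin k, c i.castSucc • x i
                = ∑ i : Fin k, (c i.castSucc - c (Fin.last k)) • x i :=
                  Finset.sum_congr rfl fun i _ => by rw [h3, sub_zero]
              _ = 0 := hkey
    · right
      intro i hi0
      induction i using Fin.lastCases with
      | last => rw [h3] at hi0; omega
      | cast j =>
          refine h2 (fun i => 1 - c i.castSucc)
            (fun i => by show 0 ≤ 1 - c i.castSucc ∧ 1 - c i.castSucc ≤ 2
                         have := hc i.castSucc; omega)
            ⟨j, by show 1 - c j.castSucc = 1; omega⟩ ?_
          have he2 : ∑ i : Fin k, (1 - c i.castSucc) • x i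
              = -∑ i : Fin k, (c i.castSucc - c (Fin.last k)) • x i := by
            rw [← Finset.sum_neg_distrib]
            refine Finset.sum_congr rfl fun i _ => ?_
            rw [← neg_smul]; congr 1; omega
          rw [he2, hkey, neg_zero]

end GroupLemma

section Core

variable {G : Type*} [AddCommGroup G]

/-- multiset-level irreducibility of a zero-sum multiset over `G` -/
def MIrr (B : Multiset G) : Prop :=
  B ≠ 0 ∧ ∀ B₁ B₂ : Multiset G, B = B₁ + B₂ → B₁.sum = 0 → B₂.sum = 0 → B₁ = 0 ∨ B₂ = 0

/-- the goodness property of the tuple `z` -/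
def GoodZ {K : ℕ} (z : Fin K → G) : Prop :=
  ∀ c : Fin K → ℤ, (∀ i, -1 ≤ c i ∧ c i ≤ 1) → ∑ i, c i • z i = 0 →
    (∀ i, c i = 0) ∨ (∀ i, c i ≠ 0)

lemma exists_third {K : ℕ} (hK : 3 ≤ K) (i j : Fin K) : ∃ t : Fin K, t ≠ i ∧ t ≠ j := by
  by_contra h
  push_neg at h
  have hsub : (Finset.univ : Finset (Fin K)) ⊆ {i, j} := by
    intro t _
    rcases eq_or_ne t i with rfl | ht
    · exact Finset.mem_insert_self _ _
    · exact Finset.mem_insert_of_mem (Finset.mem_singleton.2 (h t ht))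
  have h1 := Finset.card_le_card hsub
  have h2 : ({i, j} : Finset (Fin K)).card ≤ 2 :=
    (Finset.card_insert_le _ _).trans (by simp)
  rw [Finset.card_univ, Fintype.card_fin] at h1
  omega

lemma GoodZ.ne_zero {K : ℕ} {z : Fin K → G} (hz : GoodZ z) (hK : 3 ≤ K) (i : Fin K) :
    z i ≠ 0 := by
  intro h
  have hsum : ∑ t, (if t = i then (1:ℤ) else 0) • z t = 0 := by
    rw [Fintype.sum_eq_single i (fun b hb => by rw [if_neg hb, zero_smul])]
    rw [if_pos rfl, one_smul, h]
  obtain ⟨t, ht, -⟩ := exists_third hK i i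
  rcases hz _ (fun t => by split_ifs <;> omega) hsum with hc | hc
  · have h2 := hc i; simp only [eq_self_iff_true, if_true] at h2; omega
  · have h2 := hc t; simp only [if_neg ht] at h2; exact h2 rfl

lemma GoodZ.add_ne_zero {K : ℕ} {z : Fin K → G} (hz : GoodZ z) (hK : 3 ≤ K)
    {i j : Fin K} (hij : i ≠ j) {e : ℤ} (he : e = 1 ∨ e = -1) :
    z i + e • z j ≠ 0 := by
  intro h
  have hsum : ∑ t, (if t = i then (1:ℤ) else if t = j then e else 0) • z t = 0 := by
    rw [Fintype.sum_eq_add i j hij (fun t ht => by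
      rw [if_neg ht.1, if_neg ht.2, zero_smul])]
    have e1 : (if i = i then (1:ℤ) else if i = j then e else 0) = 1 := if_pos rfl
    have e2 : (if j = i then (1:ℤ) else if j = j then e else 0) = e := by
      rw [if_neg (Ne.symm hij), if_pos rfl]
    rw [e1, e2, one_smul, h]
  obtain ⟨t, ht1, ht2⟩ := exists_third hK i j
  have hbd : ∀ t : Fin K, -1 ≤ (if t = i then (1:ℤ) else if t = j then e else 0) ∧
      (if t = i then (1:ℤ) else if t = j then e else 0) ≤ 1 := fun t => by
    rcases he with rfl | rfl <;> split_ifs <;> omega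
  rcases hz _ hbd hsum with h1 | h1
  · have h2 := h1 i; simp only [eq_self_iff_true, if_true] at h2; omega
  · have h2 := h1 t; simp only [if_neg ht1, if_neg ht2] at h2
    exact h2 rfl

/-! generic multiset lemmas -/

lemma exists_preimage_of_le_map {α β : Type*} (f : α → β) (t : Multiset α) :
    ∀ B : Multiset β, B ≤ t.map f → ∃ B' : Multiset α, B' ≤ t ∧ B'.map f = B := by
  induction t using Multiset.induction_on with
  | empty =>
      intro B hB
      rw [Multiset.map_zero, Multiset.le_zero] at hB
      exact ⟨0, le_rfl, by simp [hB]⟩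
  | cons a t ih =>
      intro B hB
      rw [Multiset.map_cons] at hB
      by_cases hm : f a ∈ B
      · obtain ⟨B'', hle, hmap⟩ := ih (B.erase (f a)) (Multiset.erase_le_iff_le_cons.2 hB)
        refine ⟨a ::ₘ B'', Multiset.cons_le_cons _ hle, ?_⟩
        rw [Multiset.map_cons, hmap, Multiset.cons_erase hm]
      · obtain ⟨B', hle, hmap⟩ := ih B (by
          rw [← Multiset.erase_of_notMem hm]
          exact Multiset.erase_le_iff_le_cons.2 hB)
        exact ⟨B', hle.trans (Multiset.le_cons_self _ _), hmap⟩

lemma exists_partition_preimage {α β : Type*} (f : α → β) (P : Multiset (Multiset β)) :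
    ∀ u : Multiset α, P.sum = u.map f →
      ∃ P' : Multiset (Multiset α), P'.sum = u ∧ P'.map (Multiset.map f) = P := by
  induction P using Multiset.induction_on with
  | empty =>
      intro u h
      rw [Multiset.sum_zero] at h
      rw [eq_comm, Multiset.map_eq_zero] at h
      exact ⟨0, by simp [h], rfl⟩
  | cons B Q ih =>
      intro u h
      rw [Multiset.sum_cons] at h
      have hBle : B ≤ u.map f := h ▸ Multiset.le_iff_exists_add.2 ⟨Q.sum, rfl⟩
      obtain ⟨B', hB'u, hmap⟩ := exists_preimage_of_le_map f u B hBle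
      obtain ⟨r, rfl⟩ := Multiset.le_iff_exists_add.1 hB'u
      rw [Multiset.map_add, hmap] at h
      obtain ⟨Q', hQs, hQm⟩ := ih r (add_left_cancel h)
      exact ⟨B' ::ₘ Q', by rw [Multiset.sum_cons, hQs], by rw [Multiset.map_cons, hmap, hQm]⟩

lemma multiset_le_sum_of_mem {α : Type*} {P : Multiset (Multiset α)} {B : Multiset α}
    (h : B ∈ P) : B ≤ P.sum := by
  rw [← Multiset.cons_erase h, Multiset.sum_cons]
  exact Multiset.le_iff_exists_add.2 ⟨_, rfl⟩

lemma count_multiset_sum {α : Type*} [DecidableEq α] (a : α) (P : Multiset (Multiset α)) :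
    Multiset.count a P.sum = (P.map (Multiset.count a)).sum := by
  induction P using Multiset.induction_on with
  | empty => simp
  | cons B Q ih => simp [Multiset.sum_cons, Multiset.count_add, ih]

lemma card_multiset_sum {α : Type*} (P : Multiset (Multiset α)) :
    Multiset.card P.sum = (P.map Multiset.card).sum := by
  induction P using Multiset.induction_on with
  | empty => simp
  | cons B Q ih => simp [Multiset.sum_cons, ih]

lemma nat_sum_zero {q : Multiset ℕ} (h : q.sum = 0) : ∀ x ∈ q, x = 0 := by
  induction q using Multiset.induction_on with
  | empty => simp
  | cons a q ih =>
      rw [Multiset.sum_cons] at h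
      intro x hx
      rcases Multiset.mem_cons.1 hx with rfl | hx
      · omega
      · exact ih (by omega) x hx

lemma nat_even_sum {q : Multiset ℕ} (h : ∀ x ∈ q, Even x) : Even q.sum := by
  induction q using Multiset.induction_on with
  | empty => simp
  | cons a q ih =>
      rw [Multiset.sum_cons]
      exact (h a (Multiset.mem_cons_self _ _)).add
        (ih (fun x hx => h x (Multiset.mem_cons_of_mem hx)))

lemma sum_map_count {α M : Type*} [DecidableEq α] [Fintype α] [AddCommMonoid M] (u : Multiset α) (f : α → M) :
    (u.map f).sum = ∑ a : α, (u.count a) • f a := by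
  induction u using Multiset.induction_on with
  | empty => simp
  | cons a u ih =>
      rw [Multiset.map_cons, Multiset.sum_cons, ih]
      have : ∀ b : α, (Multiset.count b (a ::ₘ u)) • f b
          = (Multiset.count b u) • f b + (if b = a then f b else 0) := by
        intro b
        rw [Multiset.count_cons]
        split_ifs with h
        · rw [add_smul, one_smul]
        · rw [add_zero, add_zero]
      rw [Finset.sum_congr rfl (fun b _ => this b), Finset.sum_add_distrib,
        Finset.sum_ite_eq' Finset.univ a f]
      rw [if_pos (Finset.mem_univ a)]
      abel

/-! the W-level setup -/

variable {K : ℕ}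

/-- the letter interpretation map -/
def pW (z : Fin K → G) (w : Fin K × Bool) : G := bif w.2 then z w.1 else -z w.1

/-- The multiset `S₀ = ∏ (z i)(-z i)`. -/
def SSof (z : Fin K → G) : Multiset G := ∑ i : Fin K, ({z i, -z i} : Multiset G)

def univW (K : ℕ) : Multiset (Fin K × Bool) := (Finset.univ : Finset (Fin K × Bool)).val

/-- number of letters of pair `i` -/
def NW (B' : Multiset (Fin K × Bool)) (i : Fin K) : ℕ :=
  B'.count (i, true) + B'.count (i, false)

lemma NW_add (B C : Multiset (Fin K × Bool)) (i : Fin K) :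
    NW (B + C) i = NW B i + NW C i := by
  simp [NW, Multiset.count_add]; omega

lemma NW_sum (P' : Multiset (Multiset (Fin K × Bool))) (i : Fin K) :
    NW P'.sum i = (P'.map (fun B' => NW B' i)).sum := by
  induction P' using Multiset.induction_on with
  | empty => simp [NW]
  | cons B Q ih => rw [Multiset.sum_cons, NW_add, ih, Multiset.map_cons, Multiset.sum_cons]

lemma NW_univ (i : Fin K) : NW (univW K) i = 2 := by
  have h1 : Multiset.count (i, true) (univW K) = 1 :=
    Multiset.count_eq_one_of_mem Finset.univ.nodup (Finset.mem_univ _)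
  have h2 : Multiset.count (i, false) (univW K) = 1 :=
    Multiset.count_eq_one_of_mem Finset.univ.nodup (Finset.mem_univ _)
  rw [NW, h1, h2]

lemma card_eq_sum_NW (B' : Multiset (Fin K × Bool)) :
    Multiset.card B' = ∑ i, NW B' i := by
  have h1 : ∑ w : Fin K × Bool, B'.count w = Multiset.card B' := by
    rw [← Multiset.toFinset_sum_count_eq]
    exact (Finset.sum_subset (Finset.subset_univ _) (fun w _ hw =>
      Multiset.count_eq_zero_of_notMem (by simpa using hw))).symm
  rw [← h1, Fintype.sum_prod_type]
  exact Finset.sum_congr rfl fun i _ => by rw [Fintype.sum_bool]; rfl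

lemma univW_eq (K : ℕ) : univW K
    = Finset.univ.val.map (fun i : Fin K => (i, true))
      + Finset.univ.val.map (fun i : Fin K => (i, false)) := by
  have hnd : (Finset.univ.val.map (fun i : Fin K => (i, true))
      + Finset.univ.val.map (fun i : Fin K => (i, false))).Nodup := by
    rw [Multiset.nodup_add]
    refine ⟨Multiset.Nodup.map (fun a b h => congrArg Prod.fst h) Finset.univ.nodup,
      Multiset.Nodup.map (fun a b h => congrArg Prod.fst h) Finset.univ.nodup, ?_⟩
    rw [Multiset.disjoint_left]
    rintro w hw1 hw2
    obtain ⟨i, -, rfl⟩ := Multiset.mem_map.1 hw1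
    obtain ⟨j, -, hj⟩ := Multiset.mem_map.1 hw2
    exact absurd (congrArg Prod.snd hj) (by simp)
  refine ((Multiset.Nodup.ext Finset.univ.nodup hnd).2 ?_)
  intro w
  simp only [Multiset.mem_add, Multiset.mem_map]
  constructor
  · intro _
    rcases w with ⟨i, b⟩
    cases b
    · exact Or.inr ⟨i, by simp, rfl⟩
    · exact Or.inl ⟨i, by simp, rfl⟩
  · intro _
    simp [univW]


lemma sum_map_singleton' {α β : Type*} (s : Multiset α) (f : α → β) :
    (s.map fun a => ({f a} : Multiset β)).sum = s.map f := by
  induction s using Multiset.induction_on with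
  | empty => simp
  | cons a s ih => simp [ih, Multiset.singleton_add]

lemma sum_map_pW (z : Fin K → G) (B' : Multiset (Fin K × Bool)) :
    (B'.map (pW z)).sum
      = ∑ i, ((B'.count (i,true) : ℤ) - (B'.count (i,false) : ℤ)) • z i := by
  rw [sum_map_count, Fintype.sum_prod_type]
  refine Finset.sum_congr rfl fun i _ => ?_
  rw [Fintype.sum_bool]
  have ht : pW z (i,true) = z i := rfl
  have hf : pW z (i,false) = -z i := rfl
  rw [ht, hf, smul_neg, sub_smul, natCast_zsmul, natCast_zsmul, sub_eq_add_neg]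

lemma classifyW {z : Fin K → G} (hz : GoodZ z) (B' : Multiset (Fin K × Bool))
    (hle : B' ≤ univW K) (h0 : (B'.map (pW z)).sum = 0) :
    (∀ i, NW B' i = 0 ∨ NW B' i = 2) ∨ (∀ i, NW B' i = 1) := by
  have hnd : B'.Nodup := Multiset.nodup_of_le hle Finset.univ.nodup
  have hct : ∀ w, B'.count w ≤ 1 := Multiset.nodup_iff_count_le_one.1 hnd
  have hsum : ∑ i, ((B'.count (i,true) : ℤ) - (B'.count (i,false) : ℤ)) • z i = 0 := by
    rw [← sum_map_pW z B', h0]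
  have hbd : ∀ i : Fin K, -1 ≤ (B'.count (i,true) : ℤ) - (B'.count (i,false) : ℤ) ∧
      (B'.count (i,true) : ℤ) - (B'.count (i,false) : ℤ) ≤ 1 := fun i => by
    have := hct (i,true); have := hct (i,false); omega
  rcases hz _ hbd hsum with h | h
  · left; intro i
    have h2 := h i; have := hct (i,true); have := hct (i,false)
    unfold NW; omega
  · right; intro i
    have h2 := h i; have := hct (i,true); have := hct (i,false)
    unfold NW; omega

lemma pair_part_card {z : Fin K → G} (B' : Multiset (Fin K × Bool))
    (hle : B' ≤ univW K) (hpair : ∀ i, NW B' i = 0 ∨ NW B' i = 2)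
    (h0 : (B'.map (pW z)).sum = 0)
    (hMI : MIrr (B'.map (pW z))) : Multiset.card B' = 2 := by
  have hnd : B'.Nodup := Multiset.nodup_of_le hle Finset.univ.nodup
  have hct : ∀ w, B'.count w ≤ 1 := Multiset.nodup_iff_count_le_one.1 hnd
  have hne : B' ≠ 0 := fun h => hMI.1 (by rw [h, Multiset.map_zero])
  obtain ⟨w, hw⟩ := Multiset.exists_mem_of_ne_zero hne
  have h2 : NW B' w.1 = 2 := by
    have hc := Multiset.count_pos.2 hw
    have hle1 : Multiset.count w B'
        ≤ Multiset.count (w.1, true) B' + Multiset.count (w.1, false) B' := by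
      rcases w with ⟨i, b⟩
      cases b
      · show Multiset.count (i, false) B'
            ≤ Multiset.count (i, true) B' + Multiset.count (i, false) B'
        omega
      · show Multiset.count (i, true) B'
            ≤ Multiset.count (i, true) B' + Multiset.count (i, false) B'
        omega
    rcases hpair w.1 with h | h
    · exfalso; unfold NW at h; omega
    · exact h
  have hctt : (w.1, true) ∈ B' := by
    rw [← Multiset.count_pos]
    have := hct (w.1, false); unfold NW at h2; omega
  have hctf : (w.1, false) ∈ B'.erase (w.1, true) := by
    rw [← Multiset.count_pos, Multiset.count_erase_of_ne (by simp)]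
    have := hct (w.1, true); unfold NW at h2; omega
  have hdec : B' = (w.1, true) ::ₘ (w.1, false) ::ₘ ((B'.erase (w.1,true)).erase (w.1,false)) := by
    rw [Multiset.cons_erase hctf, Multiset.cons_erase hctt]
  set R := (B'.erase (w.1,true)).erase (w.1,false) with hR
  have hmapdec : B'.map (pW z) = ({z w.1, -z w.1} : Multiset G) + R.map (pW z) := by
    rw [hdec, Multiset.map_cons, Multiset.map_cons]
    show z w.1 ::ₘ (-z w.1) ::ₘ R.map (pW z) = _
    rw [Multiset.insert_eq_cons, ← Multiset.singleton_add, ← Multiset.singleton_add,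
      ← add_assoc, Multiset.singleton_add]
  have hs1 : ({z w.1, -z w.1} : Multiset G).sum = 0 := by
    rw [Multiset.insert_eq_cons, Multiset.sum_cons, Multiset.sum_singleton]
    abel
  have hs2 : (R.map (pW z)).sum = 0 := by
    have := h0
    rw [hmapdec, Multiset.sum_add, hs1, zero_add] at this
    exact this
  rcases hMI.2 _ _ hmapdec hs1 hs2 with h | h
  · exact absurd h (by rw [Multiset.insert_eq_cons]; exact Multiset.cons_ne_zero)
  · rw [Multiset.map_eq_zero] at h
    rw [hdec, h]
    rfl

lemma card_univW : Multiset.card (univW K) = 2 * K := by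
  show Multiset.card (Finset.univ : Finset (Fin K × Bool)).val = 2 * K
  rw [← Finset.card_def, Finset.card_univ, Fintype.card_prod, Fintype.card_fin,
    Fintype.card_bool]
  ring

lemma SS_eq_mapPi (z : Fin K → G) : SSof z = (univW K).map (pW z) := by
  rw [univW_eq, Multiset.map_add, Multiset.map_map, Multiset.map_map]
  have h1 : (pW z) ∘ (fun i : Fin K => (i, true)) = z := rfl
  have h2 : (pW z) ∘ (fun i : Fin K => (i, false)) = fun i => -z i := rfl
  rw [h1, h2]
  rw [SSof]
  have hins : ∀ i : Fin K, ({z i, -z i} : Multiset G) = {z i} + {-z i} := fun i => by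
    rw [Multiset.singleton_add, Multiset.insert_eq_cons]
  rw [Finset.sum_congr rfl (fun i _ => hins i), Finset.sum_add_distrib]
  congr 1
  · rw [Finset.sum_eq_multiset_sum, sum_map_singleton']
  · rw [Finset.sum_eq_multiset_sum, sum_map_singleton']

/-- the main classification: any factorization of `S₀` has `2` or `K` parts -/
lemma core_classification {z : Fin K → G} (hz : GoodZ z) (hK : 3 ≤ K)
    (P : Multiset (Multiset G)) (hP : ∀ B ∈ P, B.sum = 0 ∧ MIrr B)
    (hPsum : P.sum = SSof z) :
    Multiset.card P = 2 ∨ Multiset.card P = K := by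
  obtain ⟨P', hP'sum, hP'map⟩ := exists_partition_preimage (pW z) P (univW K)
    (by rw [hPsum, SS_eq_mapPi])
  have hmem : ∀ B' ∈ P', B' ≤ univW K ∧ (B'.map (pW z)).sum = 0 ∧ MIrr (B'.map (pW z)) := by
    intro B' hB'
    have hmm : (B'.map (pW z)) ∈ P := by
      rw [← hP'map]; exact Multiset.mem_map_of_mem _ hB'
    exact ⟨hP'sum ▸ multiset_le_sum_of_mem hB', (hP _ hmm).1, (hP _ hmm).2⟩
  set T := P'.filter (fun B' => ∀ i, NW B' i = 1) with hT
  set Q := P'.filter (fun B' => ¬ ∀ i, NW B' i = 1) with hQ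
  have hTQ : T + Q = P' := Multiset.filter_add_not _ _
  have hQpair : ∀ B' ∈ Q, (∀ i, NW B' i = 0 ∨ NW B' i = 2) := by
    intro B' hB'
    have hmemP' := Multiset.mem_of_mem_filter hB'
    have hnot := (Multiset.mem_filter.1 hB').2
    rcases classifyW hz B' (hmem B' hmemP').1 (hmem B' hmemP').2.1 with h | h
    · exact h
    · exact absurd h hnot
  have hcount2 : ∀ i, Multiset.card T + ((Q.map (fun B' => NW B' i)).sum) = 2 := by
    intro i
    have h1 : NW (univW K) i = 2 := NW_univ i
    rw [← hP'sum, NW_sum, ← hTQ, Multiset.map_add, Multiset.sum_add] at h1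
    have hTrepl : (T.map (fun B' => NW B' i)) = Multiset.replicate (Multiset.card T) 1 :=
      Multiset.eq_replicate.2 ⟨by rw [Multiset.card_map], fun x hx => by
        obtain ⟨B', hB', rfl⟩ := Multiset.mem_map.1 hx
        exact (Multiset.mem_filter.1 hB').2 i⟩
    rw [hTrepl, Multiset.sum_replicate, smul_eq_mul, mul_one] at h1
    exact h1
  have hcardPP' : Multiset.card P = Multiset.card P' := by
    rw [← hP'map, Multiset.card_map]
  have hTcard : Multiset.card T = 0 ∨ Multiset.card T = 2 := by
    have h := hcount2 ⟨0, by omega⟩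
    have he : Even ((Q.map (fun B' => NW B' ⟨0, by omega⟩)).sum) :=
      nat_even_sum (fun x hx => by
        obtain ⟨B', hB', rfl⟩ := Multiset.mem_map.1 hx
        rcases hQpair B' hB' ⟨0, by omega⟩ with h' | h'
        · rw [h']; exact Even.zero
        · rw [h']; exact even_two)
    obtain ⟨r, hr⟩ := he
    omega
  rcases hTcard with hTc | hTc
  · right
    have hTzero : T = 0 := Multiset.card_eq_zero.1 hTc
    have hallQ : P' = Q := by rw [← hTQ, hTzero, zero_add]
    have hcards : ∀ B' ∈ P', Multiset.card B' = 2 := by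
      intro B' hB'
      refine pair_part_card B' (hmem B' hB').1 (hQpair B' (hallQ ▸ hB'))
        (hmem B' hB').2.1 (hmem B' hB').2.2
    have hcardsum : Multiset.card (P'.sum) = 2 * Multiset.card P' := by
      rw [card_multiset_sum]
      have : P'.map Multiset.card = Multiset.replicate (Multiset.card P') 2 :=
        Multiset.eq_replicate.2 ⟨by rw [Multiset.card_map], fun x hx => by
          obtain ⟨B', hB', rfl⟩ := Multiset.mem_map.1 hx
          exact hcards B' hB'⟩
      rw [this, Multiset.sum_replicate, smul_eq_mul]
      ring
    rw [hP'sum, card_univW] at hcardsum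
    omega
  · left
    have hQzero : Q = 0 := by
      by_contra hQ0
      obtain ⟨B', hB'⟩ := Multiset.exists_mem_of_ne_zero hQ0
      have hN0 : ∀ i, NW B' i = 0 := by
        intro i
        have h := hcount2 i
        rw [hTc] at h
        have hz0 : (Q.map (fun B'' => NW B'' i)).sum = 0 := by omega
        exact nat_sum_zero hz0 _ (Multiset.mem_map_of_mem _ hB')
      have hcard0 : Multiset.card B' = 0 := by
        rw [card_eq_sum_NW]
        exact Finset.sum_eq_zero (fun i _ => hN0 i)
      have hB'0 : B' = 0 := Multiset.card_eq_zero.1 hcard0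
      have := (hmem B' (Multiset.mem_of_mem_filter hB')).2.2.1
      exact this (by rw [hB'0, Multiset.map_zero])
    have : Multiset.card P' = 2 := by
      rw [← hTQ, hQzero, Multiset.card_add, hTc]
      rfl
    rw [hcardPP', this]

/-- `K`-pairs factorization exists -/
lemma exists_P_K {z : Fin K → G} (hz : GoodZ z) (hK : 3 ≤ K) :
    ∃ P : Multiset (Multiset G), (∀ B ∈ P, B.sum = 0 ∧ MIrr B) ∧ P.sum = SSof z ∧
      Multiset.card P = K := by
  refine ⟨Finset.univ.val.map (fun i => ({z i, -z i} : Multiset G)), ?_, ?_, ?_⟩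
  · intro B hB
    obtain ⟨i, -, rfl⟩ := Multiset.mem_map.1 hB
    have hsum0 : ({z i, -z i} : Multiset G).sum = 0 := by
      rw [Multiset.insert_eq_cons, Multiset.sum_cons, Multiset.sum_singleton]; abel
    refine ⟨hsum0, ?_, ?_⟩
    · rw [Multiset.insert_eq_cons]; exact Multiset.cons_ne_zero
    · intro B₁ B₂ hsplit h1 h2
      by_contra hcon
      push_neg at hcon
      obtain ⟨hB₁, hB₂⟩ := hcon
      have hcard := congrArg Multiset.card hsplit
      rw [Multiset.card_add] at hcard
      have e1 : Multiset.card ({z i, -z i} : Multiset G) = 2 := by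
        rw [Multiset.insert_eq_cons]; rfl
      have b1 : Multiset.card B₁ ≠ 0 := fun h => hB₁ (Multiset.card_eq_zero.1 h)
      have b2 : Multiset.card B₂ ≠ 0 := fun h => hB₂ (Multiset.card_eq_zero.1 h)
      have hc1 : Multiset.card B₁ = 1 := by omega
      obtain ⟨g, rfl⟩ := Multiset.card_eq_one.1 hc1
      have hg : g ∈ ({z i, -z i} : Multiset G) := by
        rw [hsplit]
        exact Multiset.mem_add.2 (Or.inl (Multiset.mem_singleton_self g))
      rw [Multiset.sum_singleton] at h1
      rw [Multiset.insert_eq_cons] at hg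
      rcases Multiset.mem_cons.1 hg with h | h
      · exact hz.ne_zero hK i (by rw [← h, h1])
      · rw [Multiset.mem_singleton] at h
        apply hz.ne_zero hK i
        rw [← neg_eq_zero, ← h, h1]
  · rw [SSof, Finset.sum_eq_multiset_sum]
  · rw [Multiset.card_map, ← Finset.card_def, Finset.card_univ, Fintype.card_fin]

/-- transversals are irreducible -/
lemma trans_MIrr {z' : Fin K → G} (hz' : GoodZ z') (hK : 3 ≤ K) :
    MIrr (Finset.univ.val.map z') := by
  constructor
  · intro h
    rw [Multiset.map_eq_zero] at h
    have hc := congrArg Multiset.card h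
    rw [← Finset.card_def, Finset.card_univ, Fintype.card_fin] at hc
    simp at hc
    omega
  · intro B₁ B₂ hsplit h1 h2
    by_contra hcon
    push_neg at hcon
    obtain ⟨hB₁, hB₂⟩ := hcon
    have hle : B₁ ≤ Finset.univ.val.map z' := hsplit ▸ Multiset.le_iff_exists_add.2 ⟨B₂, rfl⟩
    obtain ⟨u₁, hu₁le, hu₁map⟩ := exists_preimage_of_le_map z' _ B₁ hle
    subst hu₁map
    have hct : ∀ a, u₁.count a ≤ 1 :=
      Multiset.nodup_iff_count_le_one.1 (Multiset.nodup_of_le hu₁le Finset.univ.nodup)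
    have hsum : ∑ i, ((u₁.count i : ℤ)) • z' i = 0 := by
      rw [← h1, sum_map_count]
      exact Finset.sum_congr rfl fun i _ => natCast_zsmul (z' i) (u₁.count i)
    rcases hz' _ (fun i => by have := hct i; omega) hsum with h | h
    · have hu0 : u₁ = 0 := Multiset.eq_zero_of_forall_notMem (fun a ha => by
        have h3 := Multiset.count_pos.2 ha
        have h4 := h a
        omega)
      exact hB₁ (by rw [hu0, Multiset.map_zero])
    · have hcnt : ∀ a, u₁.count a = 1 := fun a => by
        have h3 := hct a; have h4 := h a; omega
      have huu : u₁ = Finset.univ.val := Multiset.ext.2 fun a => by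
        rw [hcnt a, Multiset.count_eq_one_of_mem Finset.univ.nodup (Finset.mem_univ a)]
      apply hB₂
      have hcards := congrArg Multiset.card hsplit
      rw [Multiset.card_add, Multiset.card_map, Multiset.card_map, huu] at hcards
      exact Multiset.card_eq_zero.1 (by omega)

/-- 2-part factorization exists -/
lemma exists_P_2 {z : Fin K → G} (hz : GoodZ z) (hK : 3 ≤ K) (hz1 : ∑ i, z i = 0) :
    ∃ P : Multiset (Multiset G), (∀ B ∈ P, B.sum = 0 ∧ MIrr B) ∧ P.sum = SSof z ∧
      Multiset.card P = 2 := by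
  have hzneg : GoodZ (fun i => -z i) := by
    intro c hc hs
    have hs' : ∑ i, (-c i) • z i = 0 := by
      rw [← hs]
      exact Finset.sum_congr rfl fun i _ => by rw [neg_smul, ← smul_neg]
    rcases hz (fun i => -c i) (fun i => by
      show -1 ≤ -c i ∧ -c i ≤ 1
      have := hc i; omega) hs' with h | h
    · left; intro i; have := h i; omega
    · right; intro i; have := h i; omega
  refine ⟨(Finset.univ.val.map z) ::ₘ {Finset.univ.val.map (fun i => -z i)}, ?_, ?_, rfl⟩
  · intro B hB
    rcases Multiset.mem_cons.1 hB with rfl | hB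
    · refine ⟨?_, trans_MIrr hz hK⟩
      rw [← Finset.sum_eq_multiset_sum]
      exact hz1
    · rw [Multiset.mem_singleton] at hB
      subst hB
      refine ⟨?_, trans_MIrr hzneg hK⟩
      rw [← Finset.sum_eq_multiset_sum, Finset.sum_neg_distrib, hz1, neg_zero]
  · rw [Multiset.sum_cons, Multiset.sum_singleton, SSof]
    have hins : ∀ i : Fin K, ({z i, -z i} : Multiset G) = {z i} + {-z i} := fun i => by
      rw [Multiset.singleton_add, Multiset.insert_eq_cons]
    rw [Finset.sum_congr rfl (fun i _ => hins i), Finset.sum_add_distrib,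
      Finset.sum_eq_multiset_sum, Finset.sum_eq_multiset_sum,
      sum_map_singleton', sum_map_singleton']

end Core


section Bridge

variable {G : Type*} [AddCommGroup G] {n : ℕ} {U : Fin n → Type*} [∀ i, CommGroup (U i)]
  {s : Fin n → ℕ}

lemma seminormalD_mul_eq_one (hs : ∀ i, 1 ≤ s i) (i : Fin n)
    (a b : ↥(seminormalD (U i) (s i))) (h : a * b = 1) : a = 1 := by
  have hval : (a : (U i) × Multiplicative (Fin (s i) →₀ ℕ)) * b = 1 := congrArg Subtype.val h
  have hsnd : (a : (U i) × Multiplicative (Fin (s i) →₀ ℕ)).2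
      * (b : (U i) × Multiplicative (Fin (s i) →₀ ℕ)).2 = 1 := congrArg Prod.snd hval
  rcases a.property with h1 | h1
  · exact Subtype.ext h1
  · exfalso
    have hadd : Multiplicative.toAdd ((a : (U i) × Multiplicative (Fin (s i) →₀ ℕ)).2)
        + Multiplicative.toAdd ((b : (U i) × Multiplicative (Fin (s i) →₀ ℕ)).2) = 0 :=
      congrArg Multiplicative.toAdd hsnd
    have happ := DFunLike.congr_fun hadd (⟨0, hs i⟩ : Fin (s i))
    rw [Finsupp.add_apply, Finsupp.zero_apply] at happ
    have h2 := h1 (⟨0, hs i⟩ : Fin (s i))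
    omega

lemma tm_mul_eq_one (hs : ∀ i, 1 ≤ s i) (a b : Tm U s) (h : a * b = 1) :
    a = 1 ∧ b = 1 := by
  have ha : a = 1 := funext fun i =>
    seminormalD_mul_eq_one hs i (a i) (b i) (congrFun h i)
  refine ⟨ha, ?_⟩
  rw [ha, one_mul] at h
  exact h

variable (iota : Tm U s →* Multiplicative G)

lemma tblock_mul_eq_one (hs : ∀ i, 1 ≤ s i) (a b : ↥(TBlock G U s iota))
    (h : a * b = 1) : a = 1 ∧ b = 1 := by
  have hval : (a : Fm G U s) * b = 1 := congrArg Subtype.val h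
  have h1 : (a : Fm G U s).1 * (b : Fm G U s).1 = 1 := congrArg Prod.fst hval
  have h2 : (a : Fm G U s).2 * (b : Fm G U s).2 = 1 := congrArg Prod.snd hval
  have hm : Multiplicative.toAdd (a : Fm G U s).1 + Multiplicative.toAdd (b : Fm G U s).1 = 0 :=
    congrArg Multiplicative.toAdd h1
  have hcard := congrArg Multiset.card hm
  rw [Multiset.card_add, Multiset.card_zero] at hcard
  have ha1 : (a : Fm G U s).1 = 1 := by
    have h3 : Multiplicative.toAdd (a : Fm G U s).1 = 0 :=
      Multiset.card_eq_zero.1 (by omega)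
    rw [← ofAdd_toAdd (a : Fm G U s).1, h3, ofAdd_zero]
  have hb1 : (b : Fm G U s).1 = 1 := by
    have h3 : Multiplicative.toAdd (b : Fm G U s).1 = 0 :=
      Multiset.card_eq_zero.1 (by omega)
    rw [← ofAdd_toAdd (b : Fm G U s).1, h3, ofAdd_zero]
  obtain ⟨ht1, ht2⟩ := tm_mul_eq_one hs _ _ h2
  exact ⟨Subtype.ext (Prod.ext ha1 ht1), Subtype.ext (Prod.ext hb1 ht2)⟩

lemma tblock_isUnit_eq_one (hs : ∀ i, 1 ≤ s i) (a : ↥(TBlock G U s iota))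
    (h : IsUnit a) : a = 1 := by
  obtain ⟨u, rfl⟩ := h
  exact (tblock_mul_eq_one iota hs _ _ u.mul_inv).1

lemma prod_eq_one_forall {N : Type*} [CommMonoid N]
    (hred : ∀ a b : N, a * b = 1 → a = 1 ∧ b = 1) (w : Multiset N) :
    w.prod = 1 → ∀ x ∈ w, x = 1 := by
  induction w using Multiset.induction_on with
  | empty => intro _ x hx; exact absurd hx (Multiset.notMem_zero x)
  | cons a t ih =>
      intro h x hx
      rw [Multiset.prod_cons] at h
      obtain ⟨h1, h2⟩ := hred _ _ h
      rcases Multiset.mem_cons.1 hx with rfl | hx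
      · exact h1
      · exact ih h2 x hx

lemma tblock_irreducible_iff (hs : ∀ i, 1 ≤ s i) (a : ↥(TBlock G U s iota)) :
    Irreducible a ↔ (a ≠ 1 ∧ ∀ b c : ↥(TBlock G U s iota), a = b * c → b = 1 ∨ c = 1) := by
  constructor
  · rintro ⟨h1, h2⟩
    refine ⟨fun h => h1 (h ▸ isUnit_one), fun b c h => ?_⟩
    rcases h2 h with h | h
    · exact Or.inl (tblock_isUnit_eq_one iota hs _ h)
    · exact Or.inr (tblock_isUnit_eq_one iota hs _ h)
  · rintro ⟨h1, h2⟩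
    refine ⟨fun h => h1 (tblock_isUnit_eq_one iota hs _ h), fun b c h => ?_⟩
    rcases h2 b c h with h | h
    · exact Or.inl (h ▸ isUnit_one)
    · exact Or.inr (h ▸ isUnit_one)

lemma mk_injective_of_reduced {N : Type*} [CommMonoid N]
    (hred : ∀ a b : N, a * b = 1 → a = 1 ∧ b = 1) :
    Function.Injective (Associates.mk : N → Associates N) := by
  intro x y h
  obtain ⟨u, hu⟩ := Associates.mk_eq_mk_iff_associated.1 h
  have hu1 : (u : N) = 1 := (hred _ _ u.mul_inv).1
  rw [← hu, hu1, mul_one]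

lemma irreducible_mk_iff_of_reduced {N : Type*} [CommMonoid N]
    (hred : ∀ a b : N, a * b = 1 → a = 1 ∧ b = 1) (x : N) :
    Irreducible (Associates.mk x) ↔ Irreducible x := by
  constructor
  · rintro ⟨h1, h2⟩
    refine ⟨fun h => h1 (Associates.isUnit_mk.2 h), fun b c h => ?_⟩
    rcases @h2 (Associates.mk b) (Associates.mk c)
        (by rw [h, Associates.mk_mul_mk]) with h' | h'
    · exact Or.inl (Associates.isUnit_mk.1 h')
    · exact Or.inr (Associates.isUnit_mk.1 h')
  · rintro ⟨h1, h2⟩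
    refine ⟨fun h => h1 (Associates.isUnit_mk.1 h), fun u v h => ?_⟩
    obtain ⟨b, rfl⟩ := Associates.mk_surjective u
    obtain ⟨c, rfl⟩ := Associates.mk_surjective v
    rw [Associates.mk_mul_mk] at h
    rcases h2 (mk_injective_of_reduced hred h) with h' | h'
    · exact Or.inl (Associates.isUnit_mk.2 h')
    · exact Or.inr (Associates.isUnit_mk.2 h')

lemma mk_prod {N : Type*} [CommMonoid N] (w : Multiset N) :
    (w.map Associates.mk).prod = Associates.mk w.prod := by
  induction w using Multiset.induction_on with
  | empty => simp
  | cons a t ih => simp [Multiset.prod_cons, ih, Associates.mk_mul_mk]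

lemma lengthSet_eq_of_reduced {N : Type*} [CommMonoid N]
    (hred : ∀ a b : N, a * b = 1 → a = 1 ∧ b = 1) (a : N) :
    lengthSet a = {m | ∃ w : Multiset N, (∀ x ∈ w, Irreducible x) ∧ w.prod = a ∧
      Multiset.card w = m} := by
  have hinj : Function.Injective (Associates.mk : N → Associates N) :=
    mk_injective_of_reduced hred
  ext m
  simp only [lengthSet, Factorizations, Set.mem_setOf_eq]
  constructor
  · rintro ⟨zz, ⟨hzirr, hzprod⟩, hzcard⟩
    set g := Function.surjInv (Associates.mk_surjective (M := N)) with hg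
    refine ⟨zz.map g, ?_, ?_, by rw [Multiset.card_map, hzcard]⟩
    · intro x hx
      obtain ⟨x', hx', rfl⟩ := Multiset.mem_map.1 hx
      have hmk : Associates.mk (g x') = x' := Function.surjInv_eq _ _
      have hirr := hzirr x' hx'
      rw [← hmk] at hirr
      exact (irreducible_mk_iff_of_reduced hred _).1 hirr
    · apply hinj
      have hgg : zz.map (Associates.mk ∘ g) = zz.map id :=
        Multiset.map_congr rfl
          (fun x _ => Function.surjInv_eq (Associates.mk_surjective (M := N)) x)
      rw [← mk_prod, Multiset.map_map, hgg, Multiset.map_id, hzprod]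
  · rintro ⟨w, hwirr, hwprod, hwcard⟩
    refine ⟨w.map Associates.mk, ⟨?_, ?_⟩, by rw [Multiset.card_map, hwcard]⟩
    · intro x hx
      obtain ⟨x', hx', rfl⟩ := Multiset.mem_map.1 hx
      exact (irreducible_mk_iff_of_reduced hred _).2 (hwirr x' hx')
    · rw [mk_prod, hwprod]

lemma toAdd_prod {A : Type*} [AddCommMonoid A] (v : Multiset (Multiplicative A)) :
    Multiplicative.toAdd v.prod = (v.map Multiplicative.toAdd).sum := by
  induction v using Multiset.induction_on with
  | empty => simp
  | cons a t ih => simp [Multiset.prod_cons, ih]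

lemma ofAdd_sum {A : Type*} [AddCommMonoid A] (v : Multiset A) :
    Multiplicative.ofAdd v.sum = (v.map Multiplicative.ofAdd).prod := by
  induction v using Multiset.induction_on with
  | empty => simp
  | cons a t ih => simp [Multiset.sum_cons, ih]

/-- the zero-sum element `S₀ · 1` of the `T`-block monoid -/
def mkM (S₀ : Multiset G) (h : S₀.sum = 0) : ↥(TBlock G U s iota) :=
  ⟨(Multiplicative.ofAdd S₀, 1), by
    have hphi : TBlockPhi G U s iota (Multiplicative.ofAdd S₀, (1 : Tm U s)) = 1 := by
      show Multiplicative.ofAdd S₀.sum * iota 1 = 1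
      rw [h, map_one, mul_one, ofAdd_zero]
    exact MonoidHom.mem_mker.2 hphi⟩

lemma sum_eq_zero_of_mem_tblock (x : ↥(TBlock G U s iota)) (h2 : (x : Fm G U s).2 = 1) :
    (Multiplicative.toAdd (x : Fm G U s).1).sum = 0 := by
  have hx : TBlockPhi G U s iota (x : Fm G U s) = 1 := MonoidHom.mem_mker.1 x.property
  have hx' : Multiplicative.ofAdd (Multiplicative.toAdd (x : Fm G U s).1).sum
      * iota (x : Fm G U s).2 = 1 := by
    rw [← hx]; rfl
  rw [h2, map_one, mul_one] at hx'
  have h3 := congrArg Multiplicative.toAdd hx'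
  simpa using h3

lemma val_one_eq (x : ↥(TBlock G U s iota))
    (h : Multiplicative.toAdd (x : Fm G U s).1 = 0) : (x : Fm G U s).1 = 1 := by
  rw [← ofAdd_toAdd (x : Fm G U s).1, h, ofAdd_zero]

lemma irr_mkM (hs : ∀ i, 1 ≤ s i) (S₀ : Multiset G) (h : S₀.sum = 0) :
    Irreducible (mkM iota S₀ h) ↔ MIrr S₀ := by
  rw [tblock_irreducible_iff iota hs]
  constructor
  · rintro ⟨h1, h2⟩
    constructor
    · rintro rfl
      exact h1 (Subtype.ext (Prod.ext ofAdd_zero rfl))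
    · intro B₁ B₂ hsplit hs1 hs2
      have hmul : mkM iota S₀ h = mkM iota B₁ hs1 * mkM iota B₂ hs2 := by
        apply Subtype.ext
        apply Prod.ext
        · show Multiplicative.ofAdd S₀ = Multiplicative.ofAdd B₁ * Multiplicative.ofAdd B₂
          rw [← ofAdd_add, hsplit]
        · show (1 : Tm U s) = 1 * 1
          rw [mul_one]
      rcases h2 _ _ hmul with h3 | h3
      · left
        have h4 := congrArg
          (fun x : ↥(TBlock G U s iota) => Multiplicative.toAdd (x : Fm G U s).1) h3
        exact h4
      · right
        have h4 := congrArg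
          (fun x : ↥(TBlock G U s iota) => Multiplicative.toAdd (x : Fm G U s).1) h3
        exact h4
  · rintro ⟨hne, hsp⟩
    refine ⟨?_, ?_⟩
    · intro h1
      apply hne
      have h4 := congrArg
        (fun x : ↥(TBlock G U s iota) => Multiplicative.toAdd (x : Fm G U s).1) h1
      exact h4
    · intro b c hbc
      have hval : ((mkM iota S₀ h : ↥(TBlock G U s iota)) : Fm G U s)
          = (b : Fm G U s) * (c : Fm G U s) := congrArg Subtype.val hbc
      have h1 : Multiplicative.ofAdd S₀ = (b : Fm G U s).1 * (c : Fm G U s).1 :=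
        congrArg Prod.fst hval
      have h2 : (1 : Tm U s) = (b : Fm G U s).2 * (c : Fm G U s).2 :=
        congrArg Prod.snd hval
      obtain ⟨hb2, hc2⟩ := tm_mul_eq_one hs _ _ h2.symm
      have hsb := sum_eq_zero_of_mem_tblock iota b hb2
      have hsc := sum_eq_zero_of_mem_tblock iota c hc2
      have hsplit : S₀ = Multiplicative.toAdd (b : Fm G U s).1
          + Multiplicative.toAdd (c : Fm G U s).1 := by
        have h3 := congrArg Multiplicative.toAdd h1
        simpa using h3
      rcases hsp _ _ hsplit hsb hsc with h3 | h3
      · exact Or.inl (Subtype.ext (Prod.ext (val_one_eq iota b h3) hb2))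
      · exact Or.inr (Subtype.ext (Prod.ext (val_one_eq iota c h3) hc2))

lemma lengthSet_mkM (hs : ∀ i, 1 ≤ s i) (S₀ : Multiset G) (h : S₀.sum = 0) :
    lengthSet (mkM iota S₀ h)
      = {m | ∃ P : Multiset (Multiset G), (∀ B ∈ P, B.sum = 0 ∧ MIrr B) ∧ P.sum = S₀ ∧
          Multiset.card P = m} := by
  rw [lengthSet_eq_of_reduced (tblock_mul_eq_one iota hs)]
  ext m
  simp only [Set.mem_setOf_eq]
  constructor
  · rintro ⟨w, hwirr, hwprod, hwcard⟩
    have hsnd : ∀ x ∈ w, (x : Fm G U s).2 = 1 := by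
      have hp : (w.map (fun x : ↥(TBlock G U s iota) => (x : Fm G U s).2)).prod = 1 := by
        have h1 : (w.map ⇑((MonoidHom.snd (FreeCM G) (Tm U s)).comp
            (TBlock G U s iota).subtype)).prod
            = ((MonoidHom.snd (FreeCM G) (Tm U s)).comp (TBlock G U s iota).subtype)
              w.prod := Multiset.prod_hom w _
        rw [hwprod] at h1
        exact h1
      intro x hx
      exact prod_eq_one_forall (tm_mul_eq_one hs) _ hp _ (Multiset.mem_map_of_mem _ hx)
    refine ⟨w.map (fun x : ↥(TBlock G U s iota) => Multiplicative.toAdd (x : Fm G U s).1),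
      ?_, ?_, by rw [Multiset.card_map, hwcard]⟩
    · intro B hB
      obtain ⟨x, hx, rfl⟩ := Multiset.mem_map.1 hB
      have hsum0 := sum_eq_zero_of_mem_tblock iota x (hsnd x hx)
      refine ⟨hsum0, ?_⟩
      have hxeq : x = mkM iota _ hsum0 := by
        apply Subtype.ext
        apply Prod.ext
        · exact (ofAdd_toAdd (x : Fm G U s).1).symm
        · exact hsnd x hx
      have hirr := hwirr x hx
      rw [hxeq] at hirr
      exact (irr_mkM iota hs _ hsum0).1 hirr
    · have hfst : (w.map (fun x : ↥(TBlock G U s iota) => (x : Fm G U s).1)).prod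
          = Multiplicative.ofAdd S₀ := by
        have h1 : (w.map ⇑((MonoidHom.fst (FreeCM G) (Tm U s)).comp
            (TBlock G U s iota).subtype)).prod
            = ((MonoidHom.fst (FreeCM G) (Tm U s)).comp (TBlock G U s iota).subtype)
              w.prod := Multiset.prod_hom w _
        rw [hwprod] at h1
        exact h1
      have h2 : (w.map (fun x : ↥(TBlock G U s iota) => Multiplicative.toAdd (x : Fm G U s).1))
          = (w.map (fun x : ↥(TBlock G U s iota) => (x : Fm G U s).1)).map
            Multiplicative.toAdd := by
        rw [Multiset.map_map]
        rfl
      rw [h2, ← toAdd_prod, hfst, toAdd_ofAdd]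
  · rintro ⟨P, hP, hPsum, hPcard⟩
    set f : Multiset G → ↥(TBlock G U s iota) :=
      fun B => if hB : B.sum = 0 then mkM iota B hB else 1 with hfdef
    refine ⟨P.map f, ?_, ?_, by rw [Multiset.card_map, hPcard]⟩
    · intro x hx
      obtain ⟨B, hB, rfl⟩ := Multiset.mem_map.1 hx
      have h0 := (hP B hB).1
      have hfB : f B = mkM iota B h0 := by
        simp only [hfdef]
        rw [dif_pos h0]
      rw [hfB]
      exact (irr_mkM iota hs B h0).2 (hP B hB).2
    · apply Subtype.ext
      apply Prod.ext
      · have h1 : ((P.map f).map ⇑((MonoidHom.fst (FreeCM G) (Tm U s)).comp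
            (TBlock G U s iota).subtype)).prod
            = ((MonoidHom.fst (FreeCM G) (Tm U s)).comp (TBlock G U s iota).subtype)
              ((P.map f).prod) := Multiset.prod_hom _ _
        rw [Multiset.map_map] at h1
        have h2 : P.map (⇑((MonoidHom.fst (FreeCM G) (Tm U s)).comp
            (TBlock G U s iota).subtype) ∘ f) = P.map Multiplicative.ofAdd :=
          Multiset.map_congr rfl (fun B hB => by
            have h0 := (hP B hB).1
            show ((f B : ↥(TBlock G U s iota)) : Fm G U s).1 = Multiplicative.ofAdd B
            simp only [hfdef]
            rw [dif_pos h0]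
            rfl)
        rw [h2] at h1
        calc ((P.map f).prod : Fm G U s).1
            = ((MonoidHom.fst (FreeCM G) (Tm U s)).comp (TBlock G U s iota).subtype)
              ((P.map f).prod) := rfl
          _ = (P.map Multiplicative.ofAdd).prod := h1.symm
          _ = Multiplicative.ofAdd S₀ := by rw [← ofAdd_sum, hPsum]
      · have h1 : ((P.map f).map ⇑((MonoidHom.snd (FreeCM G) (Tm U s)).comp
            (TBlock G U s iota).subtype)).prod
            = ((MonoidHom.snd (FreeCM G) (Tm U s)).comp (TBlock G U s iota).subtype)
              ((P.map f).prod) := Multiset.prod_hom _ _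
        calc ((P.map f).prod : Fm G U s).2
            = ((P.map f).map ⇑((MonoidHom.snd (FreeCM G) (Tm U s)).comp
              (TBlock G U s iota).subtype)).prod := h1.symm
          _ = 1 := by
              apply Multiset.prod_eq_one
              intro y hy
              rw [Multiset.map_map] at hy
              obtain ⟨B, hB, rfl⟩ := Multiset.mem_map.1 hy
              have h0 := (hP B hB).1
              show ((f B : ↥(TBlock G U s iota)) : Fm G U s).2 = 1
              simp only [hfdef]
              rw [dif_pos h0]
              rfl

lemma multiset_sum_finset_sum {ι β : Type*} [AddCommMonoid β] (t : Finset ι)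
    (f : ι → Multiset β) :
    (∑ i ∈ t, f i).sum = ∑ i ∈ t, (f i).sum := by
  classical
  refine Finset.induction_on t ?_ ?_
  · simp
  · intro a u ha ih
    rw [Finset.sum_insert ha, Finset.sum_insert ha, Multiset.sum_add, ih]

end Bridge

/-- Step 2 in the proof of Theorem 1.1: if `G` is an infinite abelian group, then the
`T`-block monoid `B = B(G, T, ι)` satisfies `Δ(B) = ℕ`. -/
theorem tblock_delta_of_infinite_group
    {G : Type*} [AddCommGroup G] [Infinite G]
    {n : ℕ} (hn : 0 < n) (U : Fin n → Type*) [∀ i, CommGroup (U i)]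
    (s : Fin n → ℕ) (hs : ∀ i, 1 ≤ s i)
    (iota : Tm U s →* Multiplicative G) :
    DeltaMonoid ↥(TBlock G U s iota) = {d : ℕ | 0 < d} := by
  ext d
  simp only [DeltaMonoid, Set.mem_iUnion, Set.mem_setOf_eq]
  constructor
  · rintro ⟨a, k, l, -, -, hkl, -, rfl⟩
    omega
  · intro hd
    obtain ⟨z, hz1, hz2⟩ := exists_z G (d + 2) (by omega)
    have hgz : GoodZ z := hz2
    have hpair : ∀ i : Fin (d + 2), ({z i, -z i} : Multiset G).sum = 0 := fun i => by
      rw [Multiset.insert_eq_cons, Multiset.sum_cons, Multiset.sum_singleton]; abel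
    have hSsum : (SSof z).sum = 0 := by
      rw [SSof, multiset_sum_finset_sum, Finset.sum_congr rfl (fun i _ => hpair i),
        Finset.sum_const_zero]
    refine ⟨mkM iota (SSof z) hSsum, 2, d + 2, ?_, ?_, by omega, ?_, by omega⟩
    · rw [lengthSet_mkM iota hs]
      obtain ⟨P, h1, h2, h3⟩ := exists_P_2 hgz (by omega) hz1
      exact ⟨P, h1, h2, h3⟩
    · rw [lengthSet_mkM iota hs]
      obtain ⟨P, h1, h2, h3⟩ := exists_P_K hgz (by omega)
      exact ⟨P, h1, h2, h3⟩
    · intro m hm1 hm2 hmem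
      rw [lengthSet_mkM iota hs] at hmem
      obtain ⟨P, hP, hPsum, hPcard⟩ := hmem
      rcases core_classification hgz (by omega) P hP hPsum with h | h <;> omega


end
end ArXivSeminormal
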